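/- Let A/B and S/T be Farey neighbors with 0 ≤ A/B < S/T ≤ 1, P/Q = (A+S)/(B+T) their mediant, n ≥ 1, and S_n/T_n = ((n−1)P+S)/((n−1)Q+T). Let a/b and c/d be Farey neighbors with P/Q ≤ a/b < c/d < S_n/T_n and let f/g = (a+c)/(b+d) be their mediant. If the 01-digit sequence of BL(P/Q, a/b, n) is purely periodic with period word α_1⋯α_b and that of BL(P/Q, c/d, n) is purely periodic with period word β_1⋯β_d, then the 01-digit sequence of BL(P/Q, f/g, n) is purely periodic with period word β_1⋯β_d·α_1⋯α_b. -/

import Mathlib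

/-- The 01-mechanical digit sequence of `r`: `α_j(r) = ⌈(j+1)r⌉ - ⌈jr⌉`. -/
noncomputable def alpha01 (r : ℚ) (j : ℕ) : ℤ := ⌈((j : ℚ) + 1) * r⌉ - ⌈(j : ℚ) * r⌉

/-- The 10-mechanical digit sequence of `r`: `β_j(r) = ⌊(j+1)r⌋ - ⌊jr⌋`. -/
noncomputable def beta10 (r : ℚ) (j : ℕ) : ℤ := ⌊((j : ℚ) + 1) * r⌋ - ⌊(j : ℚ) * r⌋

/-- The 01-word of `r` of length `q`: `(α_1(r), …, α_q(r))`. -/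
noncomputable def word01 (r : ℚ) (q : ℕ) : List ℤ := (List.range q).map fun i => alpha01 r (i + 1)

/-- The 10-word of `r` of length `q`: `(β_1(r), …, β_q(r))`. -/
noncomputable def word10 (r : ℚ) (q : ℕ) : List ℤ := (List.range q).map fun i => beta10 r (i + 1)

/-- The broken line with slopes `r` (before) and `s` (after) and hinge abscissa `h`. -/
noncomputable def BLfun (r s : ℚ) (h : ℕ) (x : ℚ) : ℚ :=
  if x ≤ (h : ℚ) then r * x else s * (x - h) + r * h

/-- The 01-digit sequence of the broken line: `γ_j = ⌈f(j+1)⌉ - ⌈f(j)⌉`. -/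
noncomputable def gammaBL (r s : ℚ) (h : ℕ) (j : ℕ) : ℤ :=
  ⌈BLfun r s h ((j : ℚ) + 1)⌉ - ⌈BLfun r s h (j : ℚ)⌉

/-- The 10-digit sequence of the broken line: `δ_j = ⌊f(j+1)⌋ - ⌊f(j)⌋`. -/
noncomputable def deltaBL (r s : ℚ) (h : ℕ) (j : ℕ) : ℤ :=
  ⌊BLfun r s h ((j : ℚ) + 1)⌋ - ⌊BLfun r s h (j : ℚ)⌋

/-- The angle `θ_{01}` of the broken line, `Σ_{j≥1} γ_j 2^{-j}`. -/
noncomputable def theta01BL (r s : ℚ) (h : ℕ) : ℝ :=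
  ∑' j : ℕ, (gammaBL r s h (j + 1) : ℝ) / 2 ^ (j + 1)

/-- The angle `θ_{10}` of the broken line, `Σ_{j≥1} δ_j 2^{-j}`. -/
noncomputable def theta10BL (r s : ℚ) (h : ℕ) : ℝ :=
  ∑' j : ℕ, (deltaBL r s h (j + 1) : ℝ) / 2 ^ (j + 1)

/-- with `A/B < S/T` Farey neighbors, `P/Q` their mediant, `n ≥ 1`, and
`a/b < c/d` Farey neighbors with `P/Q ≤ a/b < c/d < S_n/T_n` and mediant `f/g`, if the
01-digit sequences of `BL(P/Q,a/b,n)` and `BL(P/Q,c/d,n)` are purely periodic with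
period words `α_1⋯α_b` and `β_1⋯β_d`, then the 01-digit sequence of `BL(P/Q,f/g,n)`
is purely periodic with period word `β_1⋯β_d·α_1⋯α_b`. -/
private lemma ceil_congr {x y : ℚ} (h1 : x ≤ y) (h2 : y ≤ (⌈x⌉ : ℚ)) : ⌈x⌉ = ⌈y⌉ :=
  le_antisymm (Int.ceil_le_ceil h1) (Int.ceil_le.mpr h2)

/-- `⌈(f/g)k⌉ = ⌈(c/d)k⌉` for `0 ≤ k ≤ d`, mediant `f/g = (a+c)/(b+d)`. -/
private lemma med1 (a b c d : ℕ) (hb : 0 < b) (hd : 0 < d)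
    (hF : b * c = a * d + 1) (k : ℕ) (hk : k ≤ d) :
    ⌈((a + c : ℕ) : ℚ) / ((b + d : ℕ) : ℚ) * (k : ℚ)⌉ = ⌈(c : ℚ) / (d : ℚ) * (k : ℚ)⌉ := by
  have hdq : (0:ℚ) < d := by exact_mod_cast hd
  have hgq : (0:ℚ) < ((b + d : ℕ) : ℚ) := by
    have : 0 < b + d := by omega
    exact_mod_cast this
  have hFq : (b:ℚ) * c = (a:ℚ) * d + 1 := by exact_mod_cast hF
  have hkq : (0:ℚ) ≤ (k:ℚ) := by positivity
  apply ceil_congr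
  · rw [div_mul_eq_mul_div, div_mul_eq_mul_div, div_le_div_iff₀ hgq hdq]
    push_cast
    nlinarith [hkq, hFq]
  · set m : ℤ := ⌈((a + c : ℕ) : ℚ) / ((b + d : ℕ) : ℚ) * (k : ℚ)⌉ with hm
    have h3 : ((a + c : ℕ) : ℚ) / ((b + d : ℕ) : ℚ) * (k : ℚ) ≤ (m:ℚ) := Int.le_ceil _
    rw [div_mul_eq_mul_div, div_le_iff₀ hgq] at h3
    have h3' : ((a:ℤ) + c) * k ≤ m * ((b:ℤ) + d) := by exact_mod_cast h3
    have hFZ : (b:ℤ) * c = (a:ℤ) * d + 1 := by exact_mod_cast hF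
    have hkZ : (k:ℤ) ≤ (d:ℤ) := by exact_mod_cast hk
    have hbZ : (1:ℤ) ≤ (b:ℤ) := by exact_mod_cast hb
    have hdZ : (1:ℤ) ≤ (d:ℤ) := by exact_mod_cast hd
    have hknn : (0:ℤ) ≤ (k:ℤ) := by positivity
    have hlt : (c:ℤ) * k * ((b:ℤ) + d) < (m * d + 1) * ((b:ℤ) + d) := by
      nlinarith [mul_le_mul_of_nonneg_right h3' (show (0:ℤ) ≤ (d:ℤ) by linarith)]
    have hcm : (c:ℤ) * k < m * d + 1 := lt_of_mul_lt_mul_right hlt (by positivity)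
    have hcm' : (c:ℤ) * k ≤ m * d := by omega
    rw [div_mul_eq_mul_div, div_le_iff₀ hdq]
    exact_mod_cast hcm'

/-- `⌈(f/g)(d+t)⌉ = c + ⌈(a/b)t⌉` for `0 ≤ t ≤ b`. -/
private lemma med2 (a b c d : ℕ) (hb : 0 < b) (hd : 0 < d)
    (hF : b * c = a * d + 1) (t : ℕ) (ht : t ≤ b) :
    ⌈((a + c : ℕ) : ℚ) / ((b + d : ℕ) : ℚ) * ((d : ℚ) + (t : ℚ))⌉
      = (c : ℤ) + ⌈(a : ℚ) / (b : ℚ) * (t : ℚ)⌉ := by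
  have hbq : (0:ℚ) < b := by exact_mod_cast hb
  have hgq : (0:ℚ) < ((b + d : ℕ) : ℚ) := by
    have : 0 < b + d := by omega
    exact_mod_cast this
  have hFq : (b:ℚ) * c = (a:ℚ) * d + 1 := by exact_mod_cast hF
  have htq : (0:ℚ) ≤ (t:ℚ) := by positivity
  have htq' : (t:ℚ) ≤ (b:ℚ) := by exact_mod_cast ht
  have key : ⌈((a + c : ℕ) : ℚ) / ((b + d : ℕ) : ℚ) * ((d : ℚ) + (t : ℚ))⌉
      = ⌈(a : ℚ) / (b : ℚ) * (t : ℚ) + ((c:ℤ):ℚ)⌉ := by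
    apply ceil_congr
    · rw [div_mul_eq_mul_div, div_le_iff₀ hgq]
      rw [div_mul_eq_mul_div]
      push_cast
      rw [div_add' _ _ _ (ne_of_gt hbq), div_mul_eq_mul_div, le_div_iff₀ hbq]
      nlinarith [hFq, htq, htq']
    · set m : ℤ := ⌈((a + c : ℕ) : ℚ) / ((b + d : ℕ) : ℚ) * ((d : ℚ) + (t : ℚ))⌉ with hm
      have h3 : ((a + c : ℕ) : ℚ) / ((b + d : ℕ) : ℚ) * ((d : ℚ) + (t : ℚ)) ≤ (m:ℚ) :=
        Int.le_ceil _
      rw [div_mul_eq_mul_div, div_le_iff₀ hgq] at h3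
      have h3' : ((a:ℤ) + c) * ((d:ℤ) + t) ≤ m * ((b:ℤ) + d) := by exact_mod_cast h3
      have hFZ : (b:ℤ) * c = (a:ℤ) * d + 1 := by exact_mod_cast hF
      have htZ : (t:ℤ) ≤ (b:ℤ) := by exact_mod_cast ht
      have hbZ : (1:ℤ) ≤ (b:ℤ) := by exact_mod_cast hb
      have hdZ : (1:ℤ) ≤ (d:ℤ) := by exact_mod_cast hd
      have htnn : (0:ℤ) ≤ (t:ℤ) := by positivity
      have e2 : ((c:ℤ) * b + a * t) * ((b:ℤ) + d) = ((a:ℤ) + c) * ((d:ℤ) + t) * b + b - t := by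
        linear_combination ((b:ℤ) - t) * hFZ
      have hlt : ((c:ℤ) * b + a * t) * ((b:ℤ) + d) < (m * b + 1) * ((b:ℤ) + d) := by
        nlinarith [mul_le_mul_of_nonneg_right h3' (show (0:ℤ) ≤ (b:ℤ) by linarith), e2]
      have hcm : (c:ℤ) * b + a * t < m * b + 1 := lt_of_mul_lt_mul_right hlt (by positivity)
      have hcm' : (c:ℤ) * b + a * t ≤ m * b := by omega
      rw [div_mul_eq_mul_div]
      rw [div_add' _ _ _ (ne_of_gt hbq), div_le_iff₀ hbq]
      have hq : ((c:ℚ) * b + a * t) ≤ (m:ℚ) * b := by exact_mod_cast hcm'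
      push_cast
      linarith
  rw [key, Int.ceil_add_intCast, add_comm]

private lemma ceil_period (u v : ℕ) (hv : 0 < v) (k : ℕ) :
    ⌈(u:ℚ) / (v:ℚ) * ((k:ℚ) + (v:ℚ))⌉ = ⌈(u:ℚ) / (v:ℚ) * (k:ℚ)⌉ + (u:ℤ) := by
  have hvq : (v:ℚ) ≠ 0 := by
    have : (0:ℚ) < v := by exact_mod_cast hv
    linarith
  have : (u:ℚ) / (v:ℚ) * ((k:ℚ) + (v:ℚ)) = (u:ℚ) / (v:ℚ) * (k:ℚ) + ((u:ℤ):ℚ) := by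
    field_simp; push_cast; ring
  rw [this, Int.ceil_add_intCast]

private lemma BL_line (r s : ℚ) (h : ℕ) (j : ℕ) (hj : j + 1 ≤ h) :
    gammaBL r s h j = ⌈r * ((j:ℚ) + 1)⌉ - ⌈r * (j:ℚ)⌉ := by
  have h1 : ((j:ℚ) + 1) ≤ (h:ℚ) := by exact_mod_cast hj
  have h2 : ((j:ℚ)) ≤ (h:ℚ) := by
    have : (j:ℕ) ≤ h := by omega
    exact_mod_cast this
  simp only [gammaBL, BLfun, if_pos h1, if_pos h2]

private lemma BL_curve (P Q n : ℕ) (hQ : 0 < Q) (s : ℚ) (k : ℕ) :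
    gammaBL ((P:ℚ)/(Q:ℚ)) s (n*Q) (n*Q + k)
      = ⌈s * ((k:ℚ) + 1)⌉ - ⌈s * (k:ℚ)⌉ := by
  have hQq : (Q:ℚ) ≠ 0 := by
    have : (0:ℚ) < Q := by exact_mod_cast hQ
    linarith
  have hrh : ((P:ℚ)/(Q:ℚ)) * (((n*Q : ℕ)):ℚ) = (((n*P : ℕ) : ℤ) : ℚ) := by
    push_cast; field_simp
  have key : ∀ m : ℕ, ⌈BLfun ((P:ℚ)/(Q:ℚ)) s (n*Q) ((((n*Q : ℕ)):ℚ) + (m:ℚ))⌉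
      = ((n*P : ℕ) : ℤ) + ⌈s * (m:ℚ)⌉ := by
    intro m
    simp only [BLfun]
    rcases Nat.eq_zero_or_pos m with hm | hm
    · subst hm
      rw [if_pos (by simp)]
      push_cast
      rw [add_zero, mul_zero, Int.ceil_zero, add_zero]
      rw [show ((P:ℚ)/(Q:ℚ)) * ((n:ℚ) * (Q:ℚ)) = (((n*P : ℕ) : ℤ) : ℚ) by
        push_cast; field_simp]
      exact Int.ceil_intCast _
    · have hm' : (0:ℚ) < (m:ℚ) := by exact_mod_cast hm
      rw [if_neg (by push_cast; linarith)]
      have e : (((n*Q : ℕ)):ℚ) + (m:ℚ) - ((n*Q : ℕ):ℚ) = (m:ℚ) := by ring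
      rw [e, hrh, Int.ceil_add_intCast, add_comm]
  simp only [gammaBL]
  have e1 : (((n*Q + k : ℕ)):ℚ) = (((n*Q : ℕ)):ℚ) + (k:ℚ) := by push_cast; ring
  have e2 : (((n*Q + k : ℕ)):ℚ) + 1 = (((n*Q : ℕ)):ℚ) + (((k+1 : ℕ)):ℚ) := by push_cast; ring
  rw [e2, e1, key (k+1), key k]
  push_cast
  ring

theorem broken_line_mediant_concatenation
    (A B S T P Q Sn Tn n a b c d f g : ℕ)
    (hB : 0 < B) (hT : 0 < T) (hST1 : S ≤ T)
    (hFareyST : B * S = A * T + 1)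
    (hn : 1 ≤ n)
    (hP : P = A + S) (hQ : Q = B + T)
    (hSn : Sn = (n - 1) * P + S) (hTn : Tn = (n - 1) * Q + T)
    (hb : 0 < b) (hd : 0 < d)
    (hFarey : b * c = a * d + 1)
    (hf : f = a + c) (hg : g = b + d)
    (h1 : (P : ℚ) / Q ≤ (a : ℚ) / b) (h2 : (c : ℚ) / d < (Sn : ℚ) / Tn)
    (hperA : ∀ j : ℕ, 1 ≤ j →
      gammaBL ((P : ℚ) / Q) ((a : ℚ) / b) (n * Q) (j + b) =
        gammaBL ((P : ℚ) / Q) ((a : ℚ) / b) (n * Q) j)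
    (hperC : ∀ j : ℕ, 1 ≤ j →
      gammaBL ((P : ℚ) / Q) ((c : ℚ) / d) (n * Q) (j + d) =
        gammaBL ((P : ℚ) / Q) ((c : ℚ) / d) (n * Q) j) :
    (∀ j : ℕ, 1 ≤ j →
      gammaBL ((P : ℚ) / Q) ((f : ℚ) / g) (n * Q) (j + (b + d)) =
        gammaBL ((P : ℚ) / Q) ((f : ℚ) / g) (n * Q) j) ∧
    (∀ j : ℕ, 1 ≤ j → j ≤ d →
      gammaBL ((P : ℚ) / Q) ((f : ℚ) / g) (n * Q) j =
        gammaBL ((P : ℚ) / Q) ((c : ℚ) / d) (n * Q) j) ∧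
    (∀ j : ℕ, 1 ≤ j → j ≤ b →
      gammaBL ((P : ℚ) / Q) ((f : ℚ) / g) (n * Q) (d + j) =
        gammaBL ((P : ℚ) / Q) ((a : ℚ) / b) (n * Q) j) := by
  subst hf hg
  have hQ0 : 0 < Q := by omega
  have hnQ : 0 < n * Q := Nat.mul_pos hn hQ0
  have hc0 : 0 < c := Nat.pos_of_ne_zero (by rintro rfl; simp at hFarey)
  refine ⟨?_, ?_, ?_⟩
  · -- Part 1 : periodicity with period b + d
    intro j hj1
    rcases le_or_gt (n*Q) j with hcase | hcase
    · obtain ⟨k, rfl⟩ := Nat.exists_eq_add_of_le hcase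
      have hre : n*Q + k + (b + d) = n*Q + (k + (b+d)) := by omega
      rw [hre, BL_curve P Q n hQ0, BL_curve P Q n hQ0]
      have e1 : ((k + (b+d) : ℕ):ℚ) = (k:ℚ) + ((b+d:ℕ):ℚ) := by push_cast; ring
      have e2 : ((k + (b+d) : ℕ):ℚ) + 1 = ((k+1:ℕ):ℚ) + ((b+d:ℕ):ℚ) := by push_cast; ring
      rw [e2, e1, ceil_period (a+c) (b+d) (by omega) (k+1),
        ceil_period (a+c) (b+d) (by omega) k]
      have e3 : (k:ℚ) + 1 = ((k+1:ℕ):ℚ) := by push_cast; ring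
      rw [e3]; ring
    · rcases le_or_gt (n*Q) (j + b) with hc2 | hc2
      · -- j < n*Q ≤ j + b : second half of the period word, α-part
        obtain ⟨t, ht⟩ : ∃ t, j + b = n*Q + t := ⟨j + b - n*Q, by omega⟩
        have hre : j + (b + d) = n*Q + (d + t) := by omega
        rw [hre, BL_curve P Q n hQ0, BL_line _ _ _ _ (show j + 1 ≤ n*Q by omega)]
        have ht1 : t + 1 ≤ b := by omega
        have e1 : ((d + t : ℕ):ℚ) + 1 = (d:ℚ) + ((t+1:ℕ):ℚ) := by push_cast; ring
        have e2 : ((d + t : ℕ):ℚ) = (d:ℚ) + (t:ℚ) := by push_cast; ring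
        rw [e1, e2, med2 a b c d hb hd hFarey (t+1) ht1, med2 a b c d hb hd hFarey t (by omega)]
        have h1 := hperA j hj1
        rw [ht, BL_curve P Q n hQ0, BL_line _ _ _ _ (show j + 1 ≤ n*Q by omega)] at h1
        have e3 : (t:ℚ) + 1 = ((t+1:ℕ):ℚ) := by push_cast; ring
        rw [e3] at h1
        rw [← h1]; ring
      · rcases le_or_gt (n*Q) (j + (b+d)) with hc3 | hc3
        · -- j + b < n*Q ≤ j + b + d : first half of the period word, β-part
          obtain ⟨k, hk⟩ : ∃ k, j + (b+d) = n*Q + k := ⟨j + (b+d) - n*Q, by omega⟩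
          have hkd : k + 1 ≤ d := by omega
          rw [hk, BL_curve P Q n hQ0, BL_line _ _ _ _ (show j + 1 ≤ n*Q by omega)]
          have e1 : (k:ℚ) + 1 = ((k+1:ℕ):ℚ) := by push_cast; ring
          rw [e1, med1 a b c d hb hd hFarey (k+1) hkd, med1 a b c d hb hd hFarey k (by omega)]
          have h1 := hperC (j + b) (by omega)
          have hk' : j + b + d = n*Q + k := by omega
          rw [hk', BL_curve P Q n hQ0,
            BL_line _ _ _ _ (show j + b + 1 ≤ n*Q by omega)] at h1
          rw [e1] at h1
          rw [h1]
          have h2 := hperA j hj1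
          rw [BL_line _ _ _ _ (show j + b + 1 ≤ n*Q by omega),
            BL_line _ _ _ _ (show j + 1 ≤ n*Q by omega)] at h2
          exact h2
        · -- entirely in the linear part
          rw [BL_line _ _ _ _ (show j + (b+d) + 1 ≤ n*Q by omega),
            BL_line _ _ _ _ (show j + 1 ≤ n*Q by omega)]
          have h2 := hperA (j + d) (by omega)
          rw [BL_line _ _ _ _ (show j + d + b + 1 ≤ n*Q by omega),
            BL_line _ _ _ _ (show j + d + 1 ≤ n*Q by omega)] at h2
          have h3 := hperC j hj1
          rw [BL_line _ _ _ _ (show j + d + 1 ≤ n*Q by omega),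
            BL_line _ _ _ _ (show j + 1 ≤ n*Q by omega)] at h3
          rw [show j + (b+d) = j + d + b from by omega, h2, h3]
  · -- Part 2 : agreement with c/d on the first d digits
    intro j hj1 hjd
    rcases le_or_gt (n*Q) j with hcase | hcase
    · obtain ⟨k, rfl⟩ := Nat.exists_eq_add_of_le hcase
      have hk1 : k + 1 ≤ d := by omega
      rw [BL_curve P Q n hQ0, BL_curve P Q n hQ0]
      have e1 : (k:ℚ) + 1 = ((k+1:ℕ):ℚ) := by push_cast; ring
      rw [e1, med1 a b c d hb hd hFarey (k+1) hk1, med1 a b c d hb hd hFarey k (by omega)]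
    · rw [BL_line _ _ _ _ (show j + 1 ≤ n*Q by omega),
        BL_line _ _ _ _ (show j + 1 ≤ n*Q by omega)]
  · -- Part 3 : agreement with a/b on digits d+1, …, d+b
    intro j hj1 hjb
    rcases le_or_gt (n*Q) j with hcase | hcase
    · obtain ⟨k, rfl⟩ := Nat.exists_eq_add_of_le hcase
      have hre : d + (n*Q + k) = n*Q + (d + k) := by omega
      rw [hre, BL_curve P Q n hQ0, BL_curve P Q n hQ0]
      have hk1 : k + 1 ≤ b := by omega
      have e1 : ((d + k : ℕ):ℚ) + 1 = (d:ℚ) + ((k+1:ℕ):ℚ) := by push_cast; ring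
      have e2 : ((d + k : ℕ):ℚ) = (d:ℚ) + (k:ℚ) := by push_cast; ring
      rw [e1, e2, med2 a b c d hb hd hFarey (k+1) hk1, med2 a b c d hb hd hFarey k (by omega)]
      have e3 : (k:ℚ) + 1 = ((k+1:ℕ):ℚ) := by push_cast; ring
      rw [e3]; ring
    · rcases le_or_gt (n*Q) (d + j) with hcase2 | hcase2
      · obtain ⟨k, hk⟩ : ∃ k, d + j = n*Q + k := ⟨d + j - n*Q, by omega⟩
        have hk1 : k + 1 ≤ d := by omega
        rw [hk, BL_curve P Q n hQ0, BL_line _ _ _ _ (show j + 1 ≤ n*Q by omega)]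
        have e1 : (k:ℚ) + 1 = ((k+1:ℕ):ℚ) := by push_cast; ring
        rw [e1, med1 a b c d hb hd hFarey (k+1) hk1, med1 a b c d hb hd hFarey k (by omega)]
        have h1 := hperC j hj1
        have hk' : j + d = n*Q + k := by omega
        rw [hk', BL_curve P Q n hQ0, BL_line _ _ _ _ (show j + 1 ≤ n*Q by omega)] at h1
        rw [e1] at h1
        exact h1
      · rw [BL_line _ _ _ _ (show d + j + 1 ≤ n*Q by omega),
          BL_line _ _ _ _ (show j + 1 ≤ n*Q by omega)]
        have h1 := hperC j hj1
        rw [BL_line _ _ _ _ (show j + d + 1 ≤ n*Q by omega),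
          BL_line _ _ _ _ (show j + 1 ≤ n*Q by omega)] at h1
        rw [show d + j = j + d from by omega]
        exact h1
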